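/- Under the assumptions p12·p21·p13·p31·p23·p32 = 1 and p13·p31 ≠ 1, the two vectors D_id = (p21^{-1} - p12)·e1 + (p31^{-1}p32^{-1} - p13p23)·e2 and D_(23) = (p21^{-1}p23^{-1} - p12p32)·e1 + (p31^{-1} - p13)·e2 in k² are linearly dependent, with D_id = c·D_(23) where c = (p31^{-1}p32^{-1} - p13p23)/(p31^{-1} - p13). -/

import Mathlib

/-- Under `p₁₂p₂₁p₁₃p₃₁p₂₃p₃₂ = 1` and `p₁₃p₃₁ ≠ 1`, the vectors
`D_id = (p₂₁⁻¹ - p₁₂, p₃₁⁻¹p₃₂⁻¹ - p₁₃p₂₃)` and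
`D₍₂₃₎ = (p₂₁⁻¹p₂₃⁻¹ - p₁₂p₃₂, p₃₁⁻¹ - p₁₃)` in `k²` are linearly dependent:
`D_id = c • D₍₂₃₎` with `c = (p₃₁⁻¹p₃₂⁻¹ - p₁₃p₂₃)/(p₃₁⁻¹ - p₁₃)`. -/
theorem trilinear_dependence {k : Type*} [Field k]
    (p12 p21 p13 p31 p23 p32 : k)
    (h12 : p12 ≠ 0) (h21 : p21 ≠ 0) (h13 : p13 ≠ 0) (h31 : p31 ≠ 0)
    (h23 : p23 ≠ 0) (h32 : p32 ≠ 0)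
    (hprod : p12 * p21 * p13 * p31 * p23 * p32 = 1)
    (hne : p13 * p31 ≠ 1) :
    (![p21⁻¹ - p12, p31⁻¹ * p32⁻¹ - p13 * p23] : Fin 2 → k) =
      ((p31⁻¹ * p32⁻¹ - p13 * p23) / (p31⁻¹ - p13)) •
        ![p21⁻¹ * p23⁻¹ - p12 * p32, p31⁻¹ - p13] := by
  have hd : p31⁻¹ - p13 ≠ 0 := by
    intro h
    apply hne
    have h' : p31⁻¹ = p13 := sub_eq_zero.mp h
    field_simp at h'
    linear_combination -h'
  funext i
  fin_cases i
  · show p21⁻¹ - p12 = _ * (p21⁻¹ * p23⁻¹ - p12 * p32)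
    rw [div_mul_eq_mul_div, eq_div_iff hd]
    field_simp
    linear_combination (1 - p23 * p32) * hprod
  · show p31⁻¹ * p32⁻¹ - p13 * p23 = _ * (p31⁻¹ - p13)
    rw [div_mul_eq_mul_div, mul_div_assoc, div_self hd, mul_one]
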